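/- For any bilinear form h on an n-dimensional real inner product space (V,g) and any 0 ≤ k ≤ n−1, the Girard–Newton identity c t_k(h) = (n−k)·s_k(h) holds, where c t_k(h) is the trace of the k-th cofactor transformation t_k(h). -/

import Mathlib

noncomputable section

open Finset

/-- Double forms over an `n`-dimensional real inner product space, described by their
coefficients in a fixed orthonormal basis: a `(p,q)`-double form corresponds to a function
supported on pairs of subsets of cardinalities `p` and `q`. -/
abbrev DForm (n : ℕ) := Finset (Fin n) → Finset (Fin n) → ℝ

namespace DForm

variable {n : ℕ}

/-- Sign of the shuffle placing the elements of `A` (in increasing order) before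
those of `B` (in increasing order). -/
def shuffleSign (A B : Finset (Fin n)) : ℝ :=
  (-1 : ℝ) ^ (∑ x ∈ B, (A.filter fun a => x < a).card)

/-- The exterior product of double forms. -/
def wedge (ω₁ ω₂ : DForm n) : DForm n := fun I J =>
  ∑ A ∈ I.powerset, ∑ B ∈ J.powerset,
    shuffleSign A (I \ A) * shuffleSign B (J \ B) * ω₁ A B * ω₂ (I \ A) (J \ B)

/-- Exterior powers `ω^k` of a double form. -/
def dpow (ω : DForm n) : ℕ → DForm n
  | 0 => fun I J => if I = ∅ ∧ J = ∅ then 1 else 0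
  | k + 1 => wedge ω (dpow ω k)

/-- The double Hodge star operator. -/
def hstar (ω : DForm n) : DForm n := fun I J =>
  shuffleSign Iᶜ I * shuffleSign Jᶜ J * ω Iᶜ Jᶜ

/-- The contraction `c` of double forms. -/
def contr (ω : DForm n) : DForm n := fun I J =>
  ∑ j : Fin n,
    if j ∈ I ∨ j ∈ J then 0
    else shuffleSign {j} I * shuffleSign {j} J * ω (insert j I) (insert j J)

/-- Iterated contraction `c^k`. -/
def citer (ω : DForm n) : ℕ → DForm n
  | 0 => ω
  | k + 1 => contr (citer ω k)

/-- The inner product of double forms. -/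
def dinner (ω₁ ω₂ : DForm n) : ℝ :=
  ∑ I : Finset (Fin n), ∑ J : Finset (Fin n), ω₁ I J * ω₂ I J

/-- The transpose `ω^t` of a double form. -/
def transp (ω : DForm n) : DForm n := fun I J => ω J I

/-- The composition (Greub) product `ω₁ ∘ ω₂` of double forms. -/
def comp (ω₁ ω₂ : DForm n) : DForm n := fun I J =>
  ∑ K : Finset (Fin n), ω₂ I K * ω₁ K J

/-- The scalar value of a `(0,0)`-double form. -/
def toScalar (ω : DForm n) : ℝ := ω ∅ ∅

/-- The metric, as a `(1,1)`-double form. -/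
def gMetric (n : ℕ) : DForm n := fun I J => if I = J ∧ I.card = 1 then 1 else 0

/-- Iterated composition power `ω^{∘r}` of a `(1,1)`-double form, with `ω^{∘0} = g`. -/
def cpow (ω : DForm n) : ℕ → DForm n
  | 0 => gMetric n
  | r + 1 => comp ω (cpow ω r)

/-- The `(1,1)`-double form associated to a bilinear form, given by its matrix in the
orthonormal basis. -/
def ofMatrix (h : Matrix (Fin n) (Fin n) ℝ) : DForm n := fun I J =>
  ∑ i : Fin n, ∑ j : Fin n, if I = {i} ∧ J = {j} then h i j else 0

/-- `ω` is a `(p,q)`-double form. -/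
def IsOfDeg (ω : DForm n) (p q : ℕ) : Prop :=
  ∀ I J : Finset (Fin n), ω I J ≠ 0 → I.card = p ∧ J.card = q

/-- `ω` is a symmetric double form. -/
def IsSym (ω : DForm n) : Prop := ∀ I J, ω I J = ω J I

/-- The sign relating `e_{v 0} ∧ ⋯ ∧ e_{v (p-1)}` to the corresponding increasing
basis `p`-vector (and `0` if the indices are not pairwise distinct). -/
def tupleSign {p : ℕ} (v : Fin p → Fin n) : ℝ :=
  if Function.Injective v then (((Equiv.Perm.sign (Tuple.sort v)) : ℤ) : ℝ) else 0

/-- Evaluation of a double form on wedges of basis vectors indexed by arbitrary tuples. -/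
def evalT (ω : DForm n) {p q : ℕ} (v : Fin p → Fin n) (w : Fin q → Fin n) : ℝ :=
  tupleSign v * tupleSign w * ω (Finset.image v Finset.univ) (Finset.image w Finset.univ)

/-- The first Bianchi identity for a `(2,2)`-double form:
`R(x∧y,z∧t) + R(y∧z,x∧t) + R(z∧x,y∧t) = 0`. -/
def Bianchi2 (R : DForm n) : Prop :=
  ∀ x y z t : Fin n,
    evalT R ![x, y] ![z, t] + evalT R ![y, z] ![x, t] + evalT R ![z, x] ![y, t] = 0

/-- The first Bianchi identity for a `(p,p)`-double form. -/
def FirstBianchi (ω : DForm n) (p : ℕ) : Prop :=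
  ∀ (x : Fin (p + 1) → Fin n) (y : Fin (p - 1) → Fin n),
    ∑ j : Fin (p + 1),
      (-1 : ℝ) ^ (j : ℕ) * evalT ω (x ∘ Fin.succAbove j) (Fin.cons (x j) y) = 0

/-- The characteristic coefficient `s_k(h)` of a bilinear form `h`, defined through the
characteristic polynomial: `det(h - λ g) = ∑ (-1)^(n-i) s_i(h) λ^(n-i)`. -/
def sInv (h : Matrix (Fin n) (Fin n) ℝ) (k : ℕ) : ℝ :=
  (-1 : ℝ) ^ k * (Matrix.charpoly h).coeff (n - k)

/-- The `k`-th cofactor (Newton) transformation `t_k(h) = (1/(k!(n-1-k)!)) *(g^{n-1-k} h^k)`. -/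
def tInv (h : Matrix (Fin n) (Fin n) ℝ) (k : ℕ) : DForm n :=
  ((k.factorial * (n - 1 - k).factorial : ℕ) : ℝ)⁻¹ •
    hstar (wedge (dpow (gMetric n) (n - 1 - k)) (dpow (ofMatrix h) k))

/-- The `(r,q)`-cofactor `s_{(r,q)}(h) = (1/(q!(n-q-r)!)) *(g^{n-q-r} h^q)`. -/
def sCof (h : Matrix (Fin n) (Fin n) ℝ) (r q : ℕ) : DForm n :=
  ((q.factorial * (n - q - r).factorial : ℕ) : ℝ)⁻¹ •
    hstar (wedge (dpow (gMetric n) (n - q - r)) (dpow (ofMatrix h) q))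

end DForm

namespace DForm

variable {n : ℕ}

/-- Rank of `i` in `I`: the number of elements of `I` smaller than `i`. -/
def rk (I : Finset (Fin n)) (i : Fin n) : ℕ := (I.filter (· < i)).card

lemma shuffleSign_sq (A B : Finset (Fin n)) : shuffleSign A B * shuffleSign A B = 1 := by
  rw [shuffleSign, ← pow_add, Even.neg_one_pow ⟨_, rfl⟩]

lemma shuffleSign_singleton (i : Fin n) (B : Finset (Fin n)) :
    shuffleSign {i} B = (-1 : ℝ) ^ rk B i := by
  rw [shuffleSign, rk, Finset.card_filter]
  congr 1
  refine Finset.sum_congr rfl fun x _ => ?_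
  simp [Finset.filter_singleton]
  split_ifs <;> simp

lemma rk_lt {I : Finset (Fin n)} {i : Fin n} (hi : i ∈ I) : rk I i < I.card := by
  apply Finset.card_lt_card
  rw [Finset.ssubset_iff_of_subset (Finset.filter_subset _ _)]
  exact ⟨i, hi, by simp⟩

lemma card_filter_lt_fin {q : ℕ} (a : Fin q) :
    (Finset.univ.filter (· < a)).card = a := by
  rw [← Fin.card_Iio (b := a)]; congr 1; ext x; simp

lemma orderEmbOfFin_rk {I : Finset (Fin n)} {q : ℕ} (hq : I.card = q) {i : Fin n} (hi : i ∈ I)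
    (hr : rk I i < q) : I.orderEmbOfFin hq ⟨rk I i, hr⟩ = i := by
  obtain ⟨a, ha⟩ : ∃ a, I.orderEmbOfFin hq a = i := by
    have h1 := Finset.range_orderEmbOfFin I hq
    have : i ∈ Set.range (I.orderEmbOfFin hq) := by rw [h1]; exact hi
    exact this
  have key : I.filter (· < i) =
      (Finset.univ.filter (fun b : Fin q => b < a)).image (I.orderEmbOfFin hq) := by
    ext x
    simp only [Finset.mem_filter, Finset.mem_image, Finset.mem_univ, true_and]
    constructor
    · rintro ⟨hxI, hxi⟩
      obtain ⟨b, hb⟩ : ∃ b, I.orderEmbOfFin hq b = x := by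
        have h1 := Finset.range_orderEmbOfFin I hq
        have : x ∈ Set.range (I.orderEmbOfFin hq) := by rw [h1]; exact hxI
        exact this
      refine ⟨b, ?_, hb⟩
      have : I.orderEmbOfFin hq b < I.orderEmbOfFin hq a := by rw [ha, hb]; exact hxi
      exact (I.orderEmbOfFin hq).lt_iff_lt.1 this
    · rintro ⟨b, hba, rfl⟩
      exact ⟨Finset.orderEmbOfFin_mem _ _ _, ha ▸ (I.orderEmbOfFin hq).strictMono hba⟩
  have hrk : rk I i = (a : ℕ) := by
    rw [rk, key, Finset.card_image_of_injective _ (I.orderEmbOfFin hq).injective,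
      card_filter_lt_fin]
  have heq : (⟨rk I i, hr⟩ : Fin q) = a := Fin.ext hrk
  rw [heq, ha]

lemma rk_orderEmbOfFin {I : Finset (Fin n)} {q : ℕ} (hq : I.card = q) (a : Fin q) :
    rk I (I.orderEmbOfFin hq a) = (a : ℕ) := by
  have hmem : I.orderEmbOfFin hq a ∈ I := Finset.orderEmbOfFin_mem _ _ _
  have hr : rk I (I.orderEmbOfFin hq a) < q := by have := rk_lt hmem; omega
  have := orderEmbOfFin_rk hq hmem hr
  have h2 : (⟨rk I (I.orderEmbOfFin hq a), hr⟩ : Fin q) = a :=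
    (I.orderEmbOfFin hq).injective this
  exact congrArg Fin.val h2

lemma orderEmbOfFin_erase {I : Finset (Fin n)} {q : ℕ} (hq : I.card = q + 1) {i : Fin n}
    (hi : i ∈ I) (a : Fin q) :
    (I.erase i).orderEmbOfFin (by simp [Finset.card_erase_of_mem hi, hq]) a
      = I.orderEmbOfFin hq ((⟨rk I i, hq ▸ rk_lt hi⟩ : Fin (q + 1)).succAbove a) := by
  set r : Fin (q + 1) := ⟨rk I i, hq ▸ rk_lt hi⟩ with hr
  have hcard : (I.erase i).card = q := by simp [Finset.card_erase_of_mem hi, hq]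
  have huniq := Finset.orderEmbOfFin_unique (s := I.erase i) hcard
    (f := fun a => I.orderEmbOfFin hq (r.succAbove a)) ?_ ?_
  · exact (congrFun huniq a).symm
  · intro x
    rw [Finset.mem_erase]
    refine ⟨fun hx => ?_, Finset.orderEmbOfFin_mem _ _ _⟩
    have hri : I.orderEmbOfFin hq r = i := orderEmbOfFin_rk hq hi _
    rw [← hri] at hx
    exact Fin.succAbove_ne r x ((I.orderEmbOfFin hq).injective hx)
  · exact (I.orderEmbOfFin hq).strictMono.comp (Fin.strictMono_succAbove r)

end DForm
namespace DForm

variable {n : ℕ}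

/-- Entry of the submatrix of `h` with rows `I` and columns `J` (in increasing order). -/
def ent (h : Matrix (Fin n) (Fin n) ℝ) (I J : Finset (Fin n)) (a b : ℕ) : ℝ :=
  if ha : a < I.card then
    if hb : b < J.card then
      h (I.orderEmbOfFin rfl ⟨a, ha⟩) (J.orderEmbOfFin rfl ⟨b, hb⟩)
    else 0
  else 0

/-- The `q × q` minor of `h` with rows `I` and columns `J`. -/
def minorF (h : Matrix (Fin n) (Fin n) ℝ) (q : ℕ) (I J : Finset (Fin n)) : ℝ :=
  Matrix.det (Matrix.of fun a b : Fin q => ent h I J (a : ℕ) (b : ℕ))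

lemma ent_eq (h : Matrix (Fin n) (Fin n) ℝ) {I J : Finset (Fin n)} {q r : ℕ}
    (hq : I.card = q) (hr : J.card = r) (a : Fin q) (b : Fin r) :
    ent h I J (a : ℕ) (b : ℕ) = h (I.orderEmbOfFin hq a) (J.orderEmbOfFin hr b) := by
  have ha : (a : ℕ) < I.card := hq ▸ a.2
  have hb : (b : ℕ) < J.card := hr ▸ b.2
  rw [ent, dif_pos ha, dif_pos hb,
    show (I.orderEmbOfFin rfl ⟨(a : ℕ), ha⟩ : Fin n) = I.orderEmbOfFin hq a from
      Finset.orderEmbOfFin_eq_orderEmbOfFin_iff.2 rfl,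
    show (J.orderEmbOfFin rfl ⟨(b : ℕ), hb⟩ : Fin n) = J.orderEmbOfFin hr b from
      Finset.orderEmbOfFin_eq_orderEmbOfFin_iff.2 rfl]

lemma minorF_laplace (h : Matrix (Fin n) (Fin n) ℝ) {q : ℕ} {I J : Finset (Fin n)}
    (hI : I.card = q + 1) (hJ : J.card = q + 1) {i : Fin n} (hi : i ∈ I) :
    minorF h (q + 1) I J
      = ∑ j ∈ J, (-1 : ℝ) ^ (rk I i + rk J j) * h i j
          * minorF h q (I.erase i) (J.erase j) := by
  have hrI : rk I i < q + 1 := hI ▸ rk_lt hi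
  set r : Fin (q + 1) := ⟨rk I i, hrI⟩ with hrdef
  rw [minorF, Matrix.det_succ_row _ r]
  refine Finset.sum_nbij' (i := fun c => J.orderEmbOfFin hJ c)
    (j := fun j => if hj : j ∈ J then (⟨rk J j, hJ ▸ rk_lt hj⟩ : Fin (q + 1)) else 0)
    (fun c _ => Finset.orderEmbOfFin_mem _ _ _) (fun j hj => Finset.mem_univ _) ?_ ?_ ?_
  · intro c _
    rw [dif_pos (Finset.orderEmbOfFin_mem _ _ _)]
    apply Fin.ext
    exact rk_orderEmbOfFin hJ c
  · intro j hj
    rw [dif_pos hj]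
    exact orderEmbOfFin_rk hJ hj _
  · intro c _
    set j : Fin n := J.orderEmbOfFin hJ c with hjdef
    have hjJ : j ∈ J := Finset.orderEmbOfFin_mem _ _ _
    have hcrk : (c : ℕ) = rk J j := (rk_orderEmbOfFin hJ c).symm
    have hIe : (I.erase i).card = q := by simp [Finset.card_erase_of_mem hi, hI]
    have hJe : (J.erase j).card = q := by simp [Finset.card_erase_of_mem hjJ, hJ]
    have hrc : rk J j < q + 1 := hJ ▸ rk_lt hjJ
    have hceq : c = (⟨rk J j, hrc⟩ : Fin (q + 1)) := Fin.ext hcrk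
    congr 1
    · congr 1
      · congr 1
        rw [hcrk]
      · rw [Matrix.of_apply, ent_eq h hI hJ r c]
        congr 1
        exact orderEmbOfFin_rk hI hi _
    · rw [minorF]
      congr 1
      ext a b
      rw [Matrix.submatrix_apply, Matrix.of_apply, Matrix.of_apply,
        ent_eq h hI hJ (r.succAbove a) (c.succAbove b), ent_eq h hIe hJe a b,
        orderEmbOfFin_erase hI hi a, orderEmbOfFin_erase hJ hjJ b]
      congr 2
      rw [hceq]

end DForm
namespace DForm

variable {n : ℕ}

lemma ofMatrix_singleton (h : Matrix (Fin n) (Fin n) ℝ) (i j : Fin n) :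
    ofMatrix h {i} {j} = h i j := by
  rw [ofMatrix]
  rw [Finset.sum_eq_single i]
  · rw [Finset.sum_eq_single j]
    · rw [if_pos ⟨rfl, rfl⟩]
    · intro b _ hb
      rw [if_neg]
      rintro ⟨-, hbj⟩
      exact hb (Finset.singleton_inj.1 hbj.symm)
    · intro hj; exact absurd (Finset.mem_univ j) hj
  · intro b _ hb
    apply Finset.sum_eq_zero; intro c _
    rw [if_neg]
    rintro ⟨hbi, -⟩
    exact hb (Finset.singleton_inj.1 hbi.symm)
  · intro hi; exact absurd (Finset.mem_univ i) hi

lemma ofMatrix_card_ne (h : Matrix (Fin n) (Fin n) ℝ) {A B : Finset (Fin n)}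
    (hc : ¬(A.card = 1 ∧ B.card = 1)) : ofMatrix h A B = 0 := by
  rw [ofMatrix]
  apply Finset.sum_eq_zero; intro i _
  apply Finset.sum_eq_zero; intro j _
  rw [if_neg]
  rintro ⟨rfl, rfl⟩
  exact hc ⟨Finset.card_singleton i, Finset.card_singleton j⟩

lemma singleton_filter_powerset (I : Finset (Fin n)) :
    I.powerset.filter (fun A => A.card = 1) = I.image (fun i => ({i} : Finset (Fin n))) := by
  ext A
  simp only [Finset.mem_filter, Finset.mem_powerset, Finset.mem_image, Finset.card_eq_one]
  constructor
  · rintro ⟨hsub, i, rfl⟩; exact ⟨i, hsub (Finset.mem_singleton_self i), rfl⟩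
  · rintro ⟨i, hi, rfl⟩; exact ⟨Finset.singleton_subset_iff.2 hi, i, rfl⟩

lemma rk_erase (I : Finset (Fin n)) (i : Fin n) : rk (I.erase i) i = rk I i := by
  rw [rk, rk]; congr 1; ext x
  simp only [Finset.mem_filter, Finset.mem_erase]
  constructor
  · rintro ⟨⟨-, h1⟩, h2⟩; exact ⟨h1, h2⟩
  · rintro ⟨h1, h2⟩; exact ⟨⟨ne_of_lt h2, h1⟩, h2⟩

lemma wedge_ofMatrix (h : Matrix (Fin n) (Fin n) ℝ) (ω : DForm n) (I J : Finset (Fin n)) :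
    wedge (ofMatrix h) ω I J = ∑ i ∈ I, ∑ j ∈ J,
      (-1 : ℝ) ^ (rk I i + rk J j) * h i j * ω (I.erase i) (J.erase j) := by
  rw [wedge]
  have h1 : ∀ A ∈ I.powerset,
      (∑ B ∈ J.powerset, shuffleSign A (I \ A) * shuffleSign B (J \ B) * ofMatrix h A B
        * ω (I \ A) (J \ B)) ≠ 0 → A.card = 1 := by
    intro A _ hne
    by_contra hcard
    apply hne
    apply Finset.sum_eq_zero; intro B _
    rw [ofMatrix_card_ne h (fun hh => hcard hh.1)]; ring
  rw [← Finset.sum_filter_of_ne h1, singleton_filter_powerset,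
    Finset.sum_image (fun a _ b _ hab => Finset.singleton_injective hab)]
  refine Finset.sum_congr rfl fun i hi => ?_
  have h2 : ∀ B ∈ J.powerset,
      (shuffleSign {i} (I \ {i}) * shuffleSign B (J \ B) * ofMatrix h {i} B
        * ω (I \ {i}) (J \ B)) ≠ 0 → B.card = 1 := by
    intro B _ hne
    by_contra hcard
    apply hne
    rw [ofMatrix_card_ne h (fun hh => hcard hh.2)]; ring
  rw [← Finset.sum_filter_of_ne h2, singleton_filter_powerset,
    Finset.sum_image (fun a _ b _ hab => Finset.singleton_injective hab)]
  refine Finset.sum_congr rfl fun j hj => ?_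
  rw [ofMatrix_singleton, Finset.sdiff_singleton_eq_erase, Finset.sdiff_singleton_eq_erase,
    shuffleSign_singleton, shuffleSign_singleton, rk_erase, rk_erase, pow_add]
  try ring

lemma dpow_ofMatrix (h : Matrix (Fin n) (Fin n) ℝ) (q : ℕ) :
    ∀ I J : Finset (Fin n), dpow (ofMatrix h) q I J
      = if I.card = q ∧ J.card = q then (q.factorial : ℝ) * minorF h q I J else 0 := by
  induction q with
  | zero =>
    intro I J
    rw [dpow]
    rw [show minorF h 0 I J = 1 from Matrix.det_isEmpty]
    simp [Finset.card_eq_zero]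
  | succ q ih =>
    intro I J
    rw [dpow, wedge_ofMatrix]
    by_cases hc : I.card = q + 1 ∧ J.card = q + 1
    · obtain ⟨hI, hJ⟩ := hc
      rw [if_pos ⟨hI, hJ⟩]
      have key : ∀ i ∈ I,
          (∑ j ∈ J, (-1 : ℝ) ^ (rk I i + rk J j) * h i j * dpow (ofMatrix h) q (I.erase i) (J.erase j))
          = (q.factorial : ℝ) * minorF h (q + 1) I J := by
        intro i hi
        rw [minorF_laplace h hI hJ hi, Finset.mul_sum]
        refine Finset.sum_congr rfl fun j hj => ?_
        rw [ih, if_pos ⟨by simp [Finset.card_erase_of_mem hi, hI],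
          by simp [Finset.card_erase_of_mem hj, hJ]⟩]
        ring
      rw [Finset.sum_congr rfl key, Finset.sum_const, hI, nsmul_eq_mul, Nat.factorial_succ]
      push_cast
      ring
    · rw [if_neg hc]
      apply Finset.sum_eq_zero; intro i hi
      apply Finset.sum_eq_zero; intro j hj
      rw [ih, if_neg, mul_zero]
      rintro ⟨e1, e2⟩
      apply hc
      have c1 : 1 ≤ I.card := Finset.card_pos.2 ⟨i, hi⟩
      have c2 : 1 ≤ J.card := Finset.card_pos.2 ⟨j, hj⟩
      rw [Finset.card_erase_of_mem hi] at e1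
      rw [Finset.card_erase_of_mem hj] at e2
      constructor <;> omega

lemma gMetric_eq : gMetric n = ofMatrix (1 : Matrix (Fin n) (Fin n) ℝ) := by
  funext A B
  rw [gMetric, ofMatrix]
  by_cases hA : ∃ i, A = {i}
  · obtain ⟨i, rfl⟩ := hA
    by_cases hB : ∃ j, B = {j}
    · obtain ⟨j, rfl⟩ := hB
      rw [show (∑ i' : Fin n, ∑ j' : Fin n,
          if ({i} : Finset (Fin n)) = {i'} ∧ ({j} : Finset (Fin n)) = {j'}
          then (1 : Matrix (Fin n) (Fin n) ℝ) i' j' else 0) = (1 : Matrix (Fin n) (Fin n) ℝ) i j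
        from ofMatrix_singleton 1 i j]
      rw [Matrix.one_apply]
      by_cases hij : i = j
      · subst hij; rw [if_pos rfl, if_pos ⟨rfl, Finset.card_singleton i⟩]
      · rw [if_neg hij, if_neg]
        rintro ⟨hh, -⟩
        exact hij (Finset.singleton_inj.1 hh)
    · have hz : (∑ i' : Fin n, ∑ j' : Fin n,
          if ({i} : Finset (Fin n)) = {i'} ∧ B = {j'}
          then (1 : Matrix (Fin n) (Fin n) ℝ) i' j' else 0) = 0 :=
        Finset.sum_eq_zero fun i' _ => Finset.sum_eq_zero fun j' _ => by
          rw [if_neg]; rintro ⟨-, hh⟩; exact hB ⟨j', hh⟩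
      rw [hz, if_neg]
      rintro ⟨rfl, -⟩; exact hB ⟨i, rfl⟩
  · have hz : (∑ i' : Fin n, ∑ j' : Fin n,
        if A = {i'} ∧ B = {j'} then (1 : Matrix (Fin n) (Fin n) ℝ) i' j' else 0) = 0 :=
      Finset.sum_eq_zero fun i' _ => Finset.sum_eq_zero fun j' _ => by
        rw [if_neg]; rintro ⟨hh, -⟩; exact hA ⟨i', hh⟩
    rw [hz, if_neg]
    rintro ⟨rfl, hc⟩
    obtain ⟨a, ha⟩ := Finset.card_eq_one.1 hc
    exact hA ⟨a, ha⟩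

lemma minorF_one {q : ℕ} {I J : Finset (Fin n)} (hI : I.card = q) (hJ : J.card = q) :
    minorF (1 : Matrix (Fin n) (Fin n) ℝ) q I J = if I = J then 1 else 0 := by
  by_cases hIJ : I = J
  · subst hIJ
    rw [if_pos rfl, minorF]
    have hone : (Matrix.of fun a b : Fin q => ent (1 : Matrix (Fin n) (Fin n) ℝ) I I a b)
        = (1 : Matrix (Fin q) (Fin q) ℝ) := by
      ext a b
      rw [Matrix.of_apply, ent_eq 1 hI hI a b, Matrix.one_apply, Matrix.one_apply]
      by_cases hab : a = b
      · subst hab; rw [if_pos rfl, if_pos rfl]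
      · rw [if_neg hab, if_neg (fun hh => hab ((I.orderEmbOfFin hI).injective hh))]
    rw [hone, Matrix.det_one]
  · rw [if_neg hIJ, minorF]
    have hex : ∃ x ∈ I, x ∉ J := by
      by_contra hcon
      push_neg at hcon
      exact hIJ (Finset.eq_of_subset_of_card_le hcon (by omega))
    obtain ⟨x, hxI, hxJ⟩ := hex
    have hrx : rk I x < q := hI ▸ rk_lt hxI
    apply Matrix.det_eq_zero_of_row_eq_zero ⟨rk I x, hrx⟩
    intro b
    rw [Matrix.of_apply, ent_eq 1 hI hJ _ b, orderEmbOfFin_rk hI hxI, Matrix.one_apply, if_neg]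
    intro hh
    apply hxJ
    rw [hh]
    exact Finset.orderEmbOfFin_mem _ _ _

end DForm
namespace DForm

open Polynomial in
lemma sInv_eq_sum_minors {n : ℕ} (h : Matrix (Fin n) (Fin n) ℝ) {k : ℕ} (hk : k ≤ n) :
    sInv h k = ∑ K ∈ Finset.univ.powersetCard k, minorF h k K K := by
  classical
  -- the matrix whose rows in `S` come from `X • 1` and the others from `-(h.map C)`
  set a : Fin n → (Fin n → ℝ[X]) := fun i => ((X : ℝ[X]) • (1 : Matrix (Fin n) (Fin n) ℝ[X])) i with ha
  set b : Fin n → (Fin n → ℝ[X]) := fun i => (-(h.map C)) i with hb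
  have hchar : h.charmatrix = a + b := by
    funext i j
    rw [Matrix.charmatrix_apply]
    show (Matrix.diagonal fun _ : Fin n => (X : ℝ[X])) i j - C (h i j)
      = ((X : ℝ[X]) • (1 : Matrix (Fin n) (Fin n) ℝ[X])) i j + (-(h.map C)) i j
    rw [Matrix.diagonal_apply, Matrix.smul_apply, Matrix.one_apply, Matrix.neg_apply,
      Matrix.map_apply, sub_eq_add_neg, smul_ite, smul_eq_mul, mul_one, smul_zero]
  have expand : h.charpoly = ∑ S : Finset (Fin n),
      Matrix.det (Matrix.of fun i => S.piecewise a b i) := by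
    rw [Matrix.charpoly, hchar]
    have := MultilinearMap.map_add_univ
      (Matrix.detRowAlternating (n := Fin n) (R := ℝ[X])).toMultilinearMap a b
    exact this
  -- determinant of each summand
  have detN : ∀ S : Finset (Fin n),
      Matrix.det (Matrix.of fun i => S.piecewise a b i)
        = (X : ℝ[X]) ^ S.card * C ((-1 : ℝ) ^ (n - S.card) * Matrix.det
            (h.submatrix (fun t : {x // x ∉ S} => (t : Fin n)) fun t : {x // x ∉ S} => (t : Fin n))) := by
    intro S
    set e : {x // x ∈ S} ⊕ {x // x ∉ S} ≃ Fin n := Equiv.sumCompl (· ∈ S) with he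
    rw [← Matrix.det_submatrix_equiv_self e]
    have hblocks : (Matrix.of fun i => S.piecewise a b i).submatrix e e
        = Matrix.fromBlocks ((X : ℝ[X]) • (1 : Matrix {x // x ∈ S} {x // x ∈ S} ℝ[X])) 0
            (Matrix.of fun (t : {x // x ∉ S}) (s : {x // x ∈ S}) => -C (h t s))
            (Matrix.of fun (t t' : {x // x ∉ S}) => -C (h t t')) := by
      refine Matrix.ext fun i j => ?_
      cases i with
      | inl i =>
        cases j with
        | inl j =>
          simp only [Matrix.submatrix_apply, Matrix.of_apply, he, Equiv.sumCompl_apply_inl,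
            Matrix.fromBlocks_apply₁₁]
          rw [Finset.piecewise_eq_of_mem _ _ _ i.2]
          show ((X : ℝ[X]) • (1 : Matrix (Fin n) (Fin n) ℝ[X])) i j
            = ((X : ℝ[X]) • (1 : Matrix {x // x ∈ S} {x // x ∈ S} ℝ[X])) i j
          rw [Matrix.smul_apply, Matrix.smul_apply, Matrix.one_apply, Matrix.one_apply]
          by_cases hij : i = j
          · subst hij; rw [if_pos rfl, if_pos rfl]
          · rw [if_neg (fun hh => hij (Subtype.ext hh)), if_neg hij]
        | inr j =>
          simp only [Matrix.submatrix_apply, Matrix.of_apply, he, Equiv.sumCompl_apply_inl,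
            Equiv.sumCompl_apply_inr, Matrix.fromBlocks_apply₁₂, Matrix.zero_apply]
          rw [Finset.piecewise_eq_of_mem _ _ _ i.2]
          show ((X : ℝ[X]) • (1 : Matrix (Fin n) (Fin n) ℝ[X])) i j = 0
          rw [Matrix.smul_apply, Matrix.one_apply,
            if_neg (fun hh : (i : Fin n) = (j : Fin n) => j.2 (hh ▸ i.2)), smul_zero]
      | inr i =>
        cases j with
        | inl j =>
          simp only [Matrix.submatrix_apply, Matrix.of_apply, he, Equiv.sumCompl_apply_inl,
            Equiv.sumCompl_apply_inr, Matrix.fromBlocks_apply₂₁]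
          rw [Finset.piecewise_eq_of_notMem _ _ _ i.2]
          show (-(h.map C)) (i : Fin n) (j : Fin n) = -C (h i j)
          rw [Matrix.neg_apply, Matrix.map_apply]
        | inr j =>
          simp only [Matrix.submatrix_apply, Matrix.of_apply, he, Equiv.sumCompl_apply_inr,
            Matrix.fromBlocks_apply₂₂]
          rw [Finset.piecewise_eq_of_notMem _ _ _ i.2]
          show (-(h.map C)) (i : Fin n) (j : Fin n) = -C (h i j)
          rw [Matrix.neg_apply, Matrix.map_apply]
    rw [hblocks, Matrix.det_fromBlocks_zero₁₂, Matrix.det_smul, Matrix.det_one, Fintype.card_coe,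
      mul_one]
    congr 1
    have hmap : (Matrix.of fun (t t' : {x // x ∉ S}) => -C (h t t'))
        = ((-h).submatrix (fun t : {x // x ∉ S} => (t : Fin n)) fun t : {x // x ∉ S} => (t : Fin n)).map C := by
      ext t t'
      simp [Matrix.map_apply, Matrix.submatrix_apply, Matrix.neg_apply]
    rw [hmap, ← RingHom.mapMatrix_apply, ← RingHom.map_det]
    have hneg : ((-h).submatrix (fun t : {x // x ∉ S} => (t : Fin n)) fun t : {x // x ∉ S} => (t : Fin n))
        = -(h.submatrix (fun t : {x // x ∉ S} => (t : Fin n)) fun t : {x // x ∉ S} => (t : Fin n)) := rfl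
    rw [hneg, Matrix.det_neg, Fintype.card_subtype_compl, Fintype.card_coe, Fintype.card_fin]
    try rw [map_mul, map_pow, map_neg, map_one]
  -- extract the coefficient
  rw [sInv, expand, Polynomial.finset_sum_coeff]
  have hterm : ∀ S : Finset (Fin n),
      (Matrix.det (Matrix.of fun i => S.piecewise a b i)).coeff (n - k)
        = if S.card = n - k then
            (-1 : ℝ) ^ (n - S.card) * Matrix.det
              (h.submatrix (fun t : {x // x ∉ S} => (t : Fin n)) fun t : {x // x ∉ S} => (t : Fin n))
          else 0 := by
    intro S
    rw [detN S, mul_comm, Polynomial.coeff_C_mul_X_pow]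
    by_cases hc : S.card = n - k
    · rw [if_pos hc.symm, if_pos hc]
    · rw [if_neg (fun hh => hc hh.symm), if_neg hc]
  rw [Finset.sum_congr rfl fun S _ => hterm S, ← Finset.sum_filter]
  have hminor : ∀ S : Finset (Fin n), S.card = n - k →
      Matrix.det (h.submatrix (fun t : {x // x ∉ S} => (t : Fin n)) fun t : {x // x ∉ S} => (t : Fin n))
        = minorF h k Sᶜ Sᶜ := by
    intro S hS
    have hKc : Sᶜ.card = k := by
      rw [Finset.card_compl, hS, Fintype.card_fin]; omega
    have step := Matrix.det_submatrix_equiv_self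
      (((Sᶜ.orderIsoOfFin hKc).toEquiv).trans
        (Equiv.subtypeEquivRight (fun x : Fin n => Finset.mem_compl)))
      (h.submatrix (fun t : {x // x ∉ S} => (t : Fin n)) fun t : {x // x ∉ S} => (t : Fin n))
    rw [← step, minorF]
    congr 1
    ext a' b'
    rw [Matrix.submatrix_apply, Matrix.submatrix_apply, Matrix.of_apply, ent_eq h hKc hKc a' b',
      Equiv.trans_apply, Equiv.trans_apply]
    have c1 : ∀ c : Fin k,
        (((Equiv.subtypeEquivRight (fun x : Fin n => Finset.mem_compl))
          ((Sᶜ.orderIsoOfFin hKc).toEquiv c)) : Fin n) = Sᶜ.orderEmbOfFin hKc c := by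
      intro c
      rw [Equiv.subtypeEquivRight_apply]
      exact Finset.coe_orderIsoOfFin_apply _ _ _
    rw [c1 a', c1 b']
  have hbij : ∑ S ∈ Finset.univ.filter (fun S : Finset (Fin n) => S.card = n - k),
        (-1 : ℝ) ^ (n - S.card) * Matrix.det
          (h.submatrix (fun t : {x // x ∉ S} => (t : Fin n)) fun t : {x // x ∉ S} => (t : Fin n))
      = ∑ K ∈ Finset.univ.powersetCard k, (-1 : ℝ) ^ k * minorF h k K K := by
    refine Finset.sum_nbij' (i := fun S => Sᶜ) (j := fun K => Kᶜ) ?_ ?_ ?_ ?_ ?_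
    · intro S hS
      rw [Finset.mem_filter] at hS
      rw [Finset.mem_powersetCard_univ, Finset.card_compl, hS.2, Fintype.card_fin]
      omega
    · intro K hK
      rw [Finset.mem_powersetCard_univ] at hK
      rw [Finset.mem_filter, Finset.card_compl, hK, Fintype.card_fin]
      exact ⟨Finset.mem_univ _, rfl⟩
    · intro S _; exact compl_compl S
    · intro K _; exact compl_compl K
    · intro S hS
      rw [Finset.mem_filter] at hS
      rw [hminor S hS.2, hS.2]
      congr 2
      omega
  rw [hbij, Finset.mul_sum]
  refine Finset.sum_congr rfl fun K _ => ?_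
  rw [← mul_assoc, ← pow_add, Even.neg_one_pow ⟨k, rfl⟩, one_mul]

end DForm
namespace DForm

variable {n : ℕ}

lemma toScalar_contr (ω : DForm n) : toScalar (contr ω) = ∑ j : Fin n, ω {j} {j} := by
  rw [toScalar, contr]
  refine Finset.sum_congr rfl fun j _ => ?_
  rw [if_neg (by simp)]
  simp [shuffleSign]

lemma hstar_singleton (ω : DForm n) (j : Fin n) :
    hstar ω {j} {j} = ω ({j}ᶜ) ({j}ᶜ) := by
  rw [hstar, shuffleSign_sq, one_mul]

lemma wedge_gh (h : Matrix (Fin n) (Fin n) ℝ) {k : ℕ} (hk1 : k + 1 ≤ n)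
    {T : Finset (Fin n)} (hT : T.card = n - 1) :
    wedge (dpow (gMetric n) (n - 1 - k)) (dpow (ofMatrix h) k) T T
      = (((n - 1 - k).factorial * k.factorial : ℕ) : ℝ)
          * ∑ K ∈ T.powersetCard k, minorF h k K K := by
  set m := n - 1 - k with hm
  rw [gMetric_eq, wedge]
  have hinner : ∀ A ∈ T.powerset,
      (∑ B ∈ T.powerset, shuffleSign A (T \ A) * shuffleSign B (T \ B)
        * dpow (ofMatrix 1) m A B * dpow (ofMatrix h) k (T \ A) (T \ B))
      = (if A.card = m then ((m.factorial * k.factorial : ℕ) : ℝ)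
          * minorF h k (T \ A) (T \ A) else 0) := by
    intro A hA
    have hz : ∀ B ∈ T.powerset, B ≠ A →
        shuffleSign A (T \ A) * shuffleSign B (T \ B)
          * dpow (ofMatrix 1) m A B * dpow (ofMatrix h) k (T \ A) (T \ B) = 0 := by
      intro B _ hBA
      rw [dpow_ofMatrix]
      by_cases hcards : A.card = m ∧ B.card = m
      · rw [if_pos hcards, minorF_one hcards.1 hcards.2, if_neg (fun hh => hBA hh.symm)]
        ring
      · rw [if_neg hcards]; ring
    rw [Finset.sum_eq_single_of_mem A hA hz]
    by_cases hAm : A.card = m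
    · have hcs : (T \ A).card = k := by
        rw [Finset.card_sdiff_of_subset (Finset.mem_powerset.1 hA), hT, hAm]; omega
      rw [if_pos hAm, dpow_ofMatrix, if_pos ⟨hAm, hAm⟩, minorF_one hAm hAm, if_pos rfl,
        dpow_ofMatrix, if_pos ⟨hcs, hcs⟩]
      have hsq := shuffleSign_sq A (T \ A)
      push_cast
      linear_combination
        ((m.factorial : ℝ) * (k.factorial : ℝ) * minorF h k (T \ A) (T \ A)) * hsq
    · rw [if_neg hAm, dpow_ofMatrix, if_neg (fun hh => hAm hh.1)]; ring
  rw [Finset.sum_congr rfl hinner, ← Finset.sum_filter, ← Finset.powersetCard_eq_filter,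
    Finset.mul_sum]
  refine Finset.sum_nbij' (i := fun A => T \ A) (j := fun K => T \ K) ?_ ?_ ?_ ?_ ?_
  · intro A hA
    rw [Finset.mem_powersetCard] at hA ⊢
    refine ⟨Finset.sdiff_subset, ?_⟩
    rw [Finset.card_sdiff_of_subset hA.1, hT, hA.2]
    omega
  · intro K hK
    rw [Finset.mem_powersetCard] at hK ⊢
    refine ⟨Finset.sdiff_subset, ?_⟩
    rw [Finset.card_sdiff_of_subset hK.1, hT, hK.2]
  · intro A hA
    rw [Finset.mem_powersetCard] at hA
    exact Finset.sdiff_sdiff_eq_self hA.1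
  · intro K hK
    rw [Finset.mem_powersetCard] at hK
    exact Finset.sdiff_sdiff_eq_self hK.1
  · intro A _
    rfl

end DForm


open DForm in
/-- Girard–Newton identity: `c t_k(h) = (n-k) s_k(h)`. -/
theorem statement7 (n : ℕ) (hn : 1 ≤ n) (h : Matrix (Fin n) (Fin n) ℝ)
    (k : ℕ) (hk : k ≤ n - 1) :
    toScalar (contr (tInv h k)) = ((n - k : ℕ) : ℝ) * sInv h k := by
  have hkn : k + 1 ≤ n := by omega
  rw [toScalar_contr]
  have hstep : ∀ j : Fin n, tInv h k {j} {j}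
      = ∑ K ∈ ({j}ᶜ : Finset (Fin n)).powersetCard k, minorF h k K K := by
    intro j
    rw [tInv, Pi.smul_apply, Pi.smul_apply, smul_eq_mul, hstar_singleton]
    have hcT : ({j}ᶜ : Finset (Fin n)).card = n - 1 := by
      rw [Finset.card_compl, Finset.card_singleton, Fintype.card_fin]
    rw [wedge_gh h hkn hcT]
    have hcd : (((k.factorial * (n - 1 - k).factorial : ℕ) : ℝ))⁻¹
        * (((n - 1 - k).factorial * k.factorial : ℕ) : ℝ) = 1 := by
      push_cast
      rw [mul_comm ((n - 1 - k).factorial : ℝ)]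
      exact inv_mul_cancel₀ (mul_ne_zero
        (Nat.cast_ne_zero.2 (Nat.factorial_ne_zero _))
        (Nat.cast_ne_zero.2 (Nat.factorial_ne_zero _)))
    rw [← mul_assoc, hcd, one_mul]
  rw [Finset.sum_congr rfl fun j _ => hstep j]
  have h1 : ∀ j : Fin n, ({j}ᶜ : Finset (Fin n)).powersetCard k
      = (Finset.univ.powersetCard k).filter (fun K => j ∉ K) := by
    intro j
    ext K
    rw [Finset.mem_powersetCard, Finset.mem_filter, Finset.mem_powersetCard]
    constructor
    · rintro ⟨hsub, hc⟩
      refine ⟨⟨Finset.subset_univ K, hc⟩, fun hjK => ?_⟩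
      have hmem := hsub hjK
      simp at hmem
    · rintro ⟨⟨-, hc⟩, hj⟩
      refine ⟨fun x hx => Finset.mem_compl.2 ?_, hc⟩
      rw [Finset.mem_singleton]
      rintro rfl
      exact hj hx
  calc ∑ j : Fin n, ∑ K ∈ ({j}ᶜ : Finset (Fin n)).powersetCard k, minorF h k K K
      = ∑ j : Fin n, ∑ K ∈ Finset.univ.powersetCard k,
          if j ∉ K then minorF h k K K else 0 := by
        refine Finset.sum_congr rfl fun j _ => ?_
        rw [h1 j, Finset.sum_filter]
    _ = ∑ K ∈ Finset.univ.powersetCard k, ∑ j : Fin n,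
          if j ∉ K then minorF h k K K else 0 := Finset.sum_comm
    _ = ∑ K ∈ Finset.univ.powersetCard k, ((n - k : ℕ) : ℝ) * minorF h k K K := by
        refine Finset.sum_congr rfl fun K hK => ?_
        rw [Finset.sum_ite, Finset.sum_const_zero, add_zero, Finset.sum_const, nsmul_eq_mul]
        have hfc : Finset.univ.filter (fun j => j ∉ K) = Kᶜ := by
          ext x; simp [Finset.mem_compl]
        rw [hfc, Finset.card_compl, Fintype.card_fin, Finset.mem_powersetCard_univ.1 hK]
    _ = ((n - k : ℕ) : ℝ) * ∑ K ∈ Finset.univ.powersetCard k, minorF h k K K :=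
        (Finset.mul_sum _ _ _).symm
    _ = ((n - k : ℕ) : ℝ) * sInv h k := by
        rw [← sInv_eq_sum_minors h (show k ≤ n by omega)]
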